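/- Let $m \ge 1$ be an integer, $\alpha \in (0,1]$, and $f \in C^{0,\alpha}(\bar G_r)$ with $f(y',0) = 0$. Then the function $(y',t) \mapsto t^{-m} \int_0^t \int_0^{s_1} \cdots \int_0^{s_{m-1}} f(y', s_m)\, ds_m \, ds_{m-1} \cdots ds_1$ belongs to $C^{0,\alpha}(\bar G_r)$. -/

import Mathlib

open Set Metric
open scoped NNReal ENNReal

def Gset (m : ℕ) (r : ℝ) : Set (EuclideanSpace ℝ (Fin m) × ℝ) :=
  (Metric.ball (0 : EuclideanSpace ℝ (Fin m)) r) ×ˢ (Set.Ioo (0 : ℝ) r)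

/-- `iterInt f k` is the `k`-fold iterated integral of `f` in the last variable,
from `0` to `t`. -/
noncomputable def iterInt {m : ℕ} (f : EuclideanSpace ℝ (Fin m) × ℝ → ℝ) :
    ℕ → (EuclideanSpace ℝ (Fin m) × ℝ → ℝ)
  | 0 => f
  | (k + 1) => fun p => ∫ s in (0 : ℝ)..p.2, iterInt f k (p.1, s)

/-- auxiliary: build HolderOnWith from a real distance estimate -/
lemma holderOnWith_of_dist_le {X Y : Type*} [PseudoMetricSpace X] [PseudoMetricSpace Y]
    {C r : ℝ≥0} {f : X → Y} {s : Set X}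
    (h : ∀ x ∈ s, ∀ y ∈ s, dist (f x) (f y) ≤ (C : ℝ) * dist x y ^ (r : ℝ)) :
    HolderOnWith C r f s := by
  intro x hx y hy
  rw [edist_dist, edist_dist]
  calc ENNReal.ofReal (dist (f x) (f y))
      ≤ ENNReal.ofReal ((C : ℝ) * dist x y ^ (r : ℝ)) := ENNReal.ofReal_le_ofReal (h x hx y hy)
    _ = (C : ℝ≥0∞) * ENNReal.ofReal (dist x y) ^ (r : ℝ) := by
        rw [ENNReal.ofReal_mul C.coe_nonneg, ← ENNReal.ofReal_rpow_of_nonneg dist_nonneg r.coe_nonneg,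
          ENNReal.ofReal_coe_nnreal]

lemma closure_Gset {m : ℕ} {r : ℝ} (hr : 0 < r) :
    closure (Gset m r) =
      (Metric.closedBall (0 : EuclideanSpace ℝ (Fin m)) r) ×ˢ (Set.Icc (0 : ℝ) r) := by
  rw [Gset, closure_prod_eq, closure_ball _ hr.ne', closure_Ioo hr.ne]

section Main

variable {m : ℕ} {r α : ℝ} {f : EuclideanSpace ℝ (Fin m) × ℝ → ℝ}

/-- the rescaled iterated integral -/
noncomputable def hAux (f : EuclideanSpace ℝ (Fin m) × ℝ → ℝ) (k : ℕ)
    (p : EuclideanSpace ℝ (Fin m) × ℝ) : ℝ := (p.2 ^ k)⁻¹ * iterInt f k p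

lemma hAux_vanish (hzero : ∀ y' ∈ Metric.closedBall (0 : EuclideanSpace ℝ (Fin m)) r, f (y', 0) = 0)
    (k : ℕ) {y' : EuclideanSpace ℝ (Fin m)} (hy : y' ∈ Metric.closedBall 0 r) :
    hAux f k (y', 0) = 0 := by
  cases k with
  | zero => simp [hAux, iterInt, hzero y' hy]
  | succ k => simp [hAux, iterInt]

lemma hAux_formula (hzero : ∀ y' ∈ Metric.closedBall (0 : EuclideanSpace ℝ (Fin m)) r, f (y', 0) = 0)
    (k : ℕ) {y' : EuclideanSpace ℝ (Fin m)} (hy : y' ∈ Metric.closedBall 0 r) {t : ℝ}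
    (ht : 0 ≤ t) :
    hAux f (k + 1) (y', t) = ∫ u in (0:ℝ)..1, u ^ k * hAux f k (y', t * u) := by
  rcases eq_or_lt_of_le ht with h0 | h0
  · rw [← h0]
    have : ∀ u : ℝ, u ^ k * hAux f k (y', 0 * u) = 0 := by
      intro u; rw [zero_mul, hAux_vanish hzero k hy, mul_zero]
    simp only [this]
    rw [hAux_vanish hzero (k+1) hy, intervalIntegral.integral_zero]
  · have e1 : ∫ u in (0:ℝ)..1, u ^ k * hAux f k (y', t * u)
        = ∫ u in (0:ℝ)..1, (t ^ k)⁻¹ * iterInt f k (y', t * u) := by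
      apply intervalIntegral.integral_congr_ae
      filter_upwards with u hu
      rw [Set.uIoc_of_le (zero_le_one' ℝ)] at hu
      have hu0 : 0 < u := hu.1
      have htu : (0:ℝ) < t * u := mul_pos h0 hu0
      simp only [hAux, mul_pow]
      field_simp
    rw [e1, intervalIntegral.integral_const_mul]
    have e2 : (∫ u in (0:ℝ)..1, iterInt f k (y', t * u))
        = t⁻¹ • ∫ s in (0:ℝ)..t, iterInt f k (y', s) := by
      have := intervalIntegral.integral_comp_mul_left (fun s => iterInt f k (y', s))
        (a := 0) (b := 1) h0.ne'
      simpa using this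
    rw [e2, smul_eq_mul]
    simp only [hAux, iterInt]
    rw [pow_succ, mul_inv]
    ring

lemma hAux_holder (hr : 0 < r) (hα : α ∈ Set.Ioc (0 : ℝ) 1) {Cf : NNReal}
    (hf : HolderOnWith Cf ⟨α, le_of_lt hα.1⟩ f (closure (Gset m r)))
    (hzero : ∀ y' ∈ Metric.closedBall (0 : EuclideanSpace ℝ (Fin m)) r, f (y', 0) = 0)
    (k : ℕ) : HolderOnWith Cf ⟨α, le_of_lt hα.1⟩ (hAux f k) (closure (Gset m r)) := by
  induction k with
  | zero =>
    have : hAux f 0 = f := by funext p; simp [hAux, iterInt]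
    rw [this]; exact hf
  | succ k ih =>
    apply holderOnWith_of_dist_le
    intro p hp q hq
    have hp' := hp; have hq' := hq
    rw [closure_Gset hr, Set.mem_prod] at hp' hq'
    -- formulas
    have fp : hAux f (k+1) p = ∫ u in (0:ℝ)..1, u ^ k * hAux f k (p.1, p.2 * u) := by
      have := hAux_formula hzero k hp'.1 hp'.2.1
      simpa using this
    have fq : hAux f (k+1) q = ∫ u in (0:ℝ)..1, u ^ k * hAux f k (q.1, q.2 * u) := by
      have := hAux_formula hzero k hq'.1 hq'.2.1
      simpa using this
    -- maps-to and integrability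
    have hmaps : ∀ (z : EuclideanSpace ℝ (Fin m) × ℝ), z ∈ closure (Gset m r) →
        ∀ u ∈ Set.Icc (0:ℝ) 1, (z.1, z.2 * u) ∈ closure (Gset m r) := by
      intro z hz u hu
      rw [closure_Gset hr] at hz ⊢
      refine ⟨hz.1, mul_nonneg hz.2.1 hu.1, ?_⟩
      calc z.2 * u ≤ z.2 * 1 := by
            apply mul_le_mul_of_nonneg_left hu.2 hz.2.1
        _ ≤ r := by rw [mul_one]; exact hz.2.2
    have hcont : ContinuousOn (hAux f k) (closure (Gset m r)) := ih.continuousOn (by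
      exact_mod_cast hα.1)
    have hint : ∀ (z : EuclideanSpace ℝ (Fin m) × ℝ), z ∈ closure (Gset m r) →
        IntervalIntegrable (fun u => u ^ k * hAux f k (z.1, z.2 * u)) MeasureTheory.volume 0 1 := by
      intro z hz
      apply ContinuousOn.intervalIntegrable
      rw [Set.uIcc_of_le (zero_le_one' ℝ)]
      apply ContinuousOn.mul (continuousOn_pow k) -- may need adjusting
      exact hcont.comp (by fun_prop) (fun u hu => hmaps z hz u hu)
    rw [Real.dist_eq, fp, fq, ← intervalIntegral.integral_sub (hint p hp) (hint q hq)]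
    have key : ∀ u ∈ Set.uIoc (0:ℝ) 1,
        ‖u ^ k * hAux f k (p.1, p.2 * u) - u ^ k * hAux f k (q.1, q.2 * u)‖
          ≤ (Cf : ℝ) * dist p q ^ α := by
      intro u hu
      rw [Set.uIoc_of_le (zero_le_one' ℝ)] at hu
      have hu0 : 0 ≤ u := le_of_lt hu.1
      have hu1 : u ≤ 1 := hu.2
      have huIcc : u ∈ Set.Icc (0:ℝ) 1 := ⟨hu0, hu1⟩
      have hd : dist ((p.1, p.2 * u) : EuclideanSpace ℝ (Fin m) × ℝ) (q.1, q.2 * u)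
          ≤ dist p q := by
        rw [Prod.dist_eq, Prod.dist_eq]
        apply max_le_max le_rfl
        rw [Real.dist_eq, Real.dist_eq]
        calc |p.2 * u - q.2 * u| = |p.2 - q.2| * |u| := by rw [← sub_mul, abs_mul]
          _ ≤ |p.2 - q.2| * 1 := by
              apply mul_le_mul_of_nonneg_left _ (abs_nonneg _)
              rw [abs_of_nonneg hu0]; exact hu1
          _ = |p.2 - q.2| := mul_one _
      have hHolder : dist (hAux f k (p.1, p.2 * u)) (hAux f k (q.1, q.2 * u))
          ≤ (Cf : ℝ) * dist p q ^ α := by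
        have h1 := ih.edist_le (hmaps p hp u huIcc) (hmaps q hq u huIcc)
        -- convert to dist
        rw [edist_dist, edist_dist] at h1
        have h2 : ENNReal.ofReal (dist (hAux f k (p.1, p.2*u)) (hAux f k (q.1, q.2*u)))
            ≤ ENNReal.ofReal ((Cf:ℝ) * dist ((p.1, p.2*u) : EuclideanSpace ℝ (Fin m) × ℝ) (q.1,q.2*u) ^ α) := by
          refine h1.trans_eq ?_
          rw [ENNReal.ofReal_mul Cf.coe_nonneg,
            ← ENNReal.ofReal_rpow_of_nonneg dist_nonneg (le_of_lt hα.1),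
            ENNReal.ofReal_coe_nnreal]
          rfl
        have h3 := (ENNReal.ofReal_le_ofReal_iff (by positivity)).mp h2
        exact h3.trans (mul_le_mul_of_nonneg_left
          (Real.rpow_le_rpow dist_nonneg hd (le_of_lt hα.1)) Cf.coe_nonneg)
      calc ‖u ^ k * hAux f k (p.1, p.2 * u) - u ^ k * hAux f k (q.1, q.2 * u)‖
          = |u ^ k| * |hAux f k (p.1, p.2 * u) - hAux f k (q.1, q.2 * u)| := by
            rw [← mul_sub, norm_mul]; rfl
        _ ≤ 1 * ((Cf : ℝ) * dist p q ^ α) := by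
            apply mul_le_mul _ _ (abs_nonneg _) zero_le_one
            · rw [abs_of_nonneg (pow_nonneg hu0 k)]
              exact pow_le_one₀ hu0 hu1
            · exact hHolder
        _ = (Cf : ℝ) * dist p q ^ α := one_mul _
    have := intervalIntegral.norm_integral_le_of_norm_le_const key
    show _ ≤ (Cf : ℝ) * dist p q ^ α
    simpa using this

end Main

/-- Corollary A.4: if `f` is `α`-Hölder on `closure G_r` with `f(y',0) = 0`, then
`t^{-k}` times the `k`-fold iterated integral of `f` is `α`-Hölder on `closure G_r`. -/
theorem stmt_4 {m : ℕ} {r α : ℝ} (k : ℕ) (hk : 1 ≤ k) (hr : 0 < r)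
    (hα : α ∈ Set.Ioc (0 : ℝ) 1)
    {f : EuclideanSpace ℝ (Fin m) × ℝ → ℝ} {Cf : NNReal}
    (hf : HolderOnWith Cf ⟨α, le_of_lt hα.1⟩ f (closure (Gset m r)))
    (hzero : ∀ y' ∈ closure (Metric.ball (0 : EuclideanSpace ℝ (Fin m)) r), f (y', 0) = 0) :
    ∃ C : NNReal, HolderOnWith C ⟨α, le_of_lt hα.1⟩
      (fun p : EuclideanSpace ℝ (Fin m) × ℝ => (p.2 ^ k)⁻¹ * iterInt f k p)
      (closure (Gset m r)) := by
  have hzero' : ∀ y' ∈ Metric.closedBall (0 : EuclideanSpace ℝ (Fin m)) r, f (y', 0) = 0 := by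
    intro y' hy; exact hzero y' (by rwa [closure_ball _ hr.ne'])
  exact ⟨Cf, hAux_holder hr hα hf hzero' k⟩
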